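/- Let h > 0, T > 0, k, w ∈ C²([0,h]) with k > 0 on [0,h] and w(0) = w(h) = 0. Let G ∈ C([0,T]) and let q be a classical solution of the transport equation with flux G and initial data q₀ ≡ 0. Let λ ≥ 0 and let ρ ∈ C²([0,h]) satisfy (k ρ')' + w ρ' + λ ρ = 0 on [0,h], ρ'(0) = ρ'(h) = 0, and ρ(0) = 1. Then the function H(t) := ∫₀ʰ ρ(z) q(z,t) dz satisfies the differential equation H'(t) = k(0) G(t) − λ H(t) for t ∈ (0,T], and consequently H(t) = k(0) e^{−λ t} ∫₀ᵗ G(s) e^{λ s} ds for all t ∈ [0,T]. -/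

import Mathlib

open MeasureTheory Set Filter intervalIntegral

/-- A classical solution of the transport equation `q_t + (w q)_z = (k q_z)_z`
on `[0,h] × (0,T]` with flux boundary condition `q_z(0,t) = -F(t)`,
no-flux upper boundary condition `q_z(h,t) = 0`, and initial data `q₀`,
together with its partial derivatives `qz`, `qzz`, `qt`. -/
structure ClassicalSolution (h T : ℝ) (k w F q₀ : ℝ → ℝ)
    (q qz qzz qt : ℝ → ℝ → ℝ) : Prop where
  cont : ContinuousOn (fun x : ℝ × ℝ => q x.1 x.2) (Icc 0 h ×ˢ Icc 0 T)
  hasDeriv_z : ∀ z ∈ Icc (0:ℝ) h, ∀ t ∈ Ioc (0:ℝ) T,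
    HasDerivWithinAt (fun z' => q z' t) (qz z t) (Icc 0 h) z
  hasDeriv_zz : ∀ z ∈ Icc (0:ℝ) h, ∀ t ∈ Ioc (0:ℝ) T,
    HasDerivWithinAt (fun z' => qz z' t) (qzz z t) (Icc 0 h) z
  hasDeriv_t : ∀ z ∈ Icc (0:ℝ) h, ∀ t ∈ Ioc (0:ℝ) T,
    HasDerivWithinAt (fun t' => q z t') (qt z t) (Icc 0 T) t
  cont_z : ContinuousOn (fun x : ℝ × ℝ => qz x.1 x.2) (Icc 0 h ×ˢ Ioc 0 T)
  cont_zz : ContinuousOn (fun x : ℝ × ℝ => qzz x.1 x.2) (Icc 0 h ×ˢ Ioc 0 T)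
  cont_t : ContinuousOn (fun x : ℝ × ℝ => qt x.1 x.2) (Icc 0 h ×ˢ Ioc 0 T)
  pde : ∀ z ∈ Icc (0:ℝ) h, ∀ t ∈ Ioc (0:ℝ) T,
    qt z t + (derivWithin w (Icc 0 h) z * q z t + w z * qz z t)
      = derivWithin k (Icc 0 h) z * qz z t + k z * qzz z t
  bc_lower : ∀ t ∈ Ioc (0:ℝ) T, qz 0 t = -F t
  bc_upper : ∀ t ∈ Ioc (0:ℝ) T, qz h t = 0
  ic : ∀ z ∈ Icc (0:ℝ) h, q z 0 = q₀ z

/-- `q` is a classical solution of the transport equation (partial derivatives exist). -/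
def IsClassicalSolution (h T : ℝ) (k w F q₀ : ℝ → ℝ) (q : ℝ → ℝ → ℝ) : Prop :=
  ∃ qz qzz qt, ClassicalSolution h T k w F q₀ q qz qzz qt

/-- If `ρ` is a Neumann eigenfunction of the adjoint operator with eigenvalue `λ`,
normalized by `ρ(0) = 1`, and `q` solves the transport equation with flux `G` and
zero initial data, then `H(t) = ∫₀ʰ ρ q(·,t)` solves `H' = k(0) G - λ H`, hence
`H(t) = k(0) e^{-λt} ∫₀ᵗ G(s) e^{λs} ds`. -/
theorem weighted_observation_ode
    (h T : ℝ) (hh : 0 < h) (hT : 0 < T) (k w G : ℝ → ℝ)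
    (hk : ContDiffOn ℝ 2 k (Icc 0 h)) (hw : ContDiffOn ℝ 2 w (Icc 0 h))
    (hkpos : ∀ z ∈ Icc (0:ℝ) h, 0 < k z)
    (hw0 : w 0 = 0) (hwh : w h = 0)
    (hG : ContinuousOn G (Icc 0 T))
    (q : ℝ → ℝ → ℝ) (hq : IsClassicalSolution h T k w G (fun _ => 0) q)
    (lam : ℝ) (hlam : 0 ≤ lam) (ρ : ℝ → ℝ) (hρ : ContDiffOn ℝ 2 ρ (Icc 0 h))
    (heig : ∀ z ∈ Icc (0:ℝ) h,
      derivWithin (fun y => k y * derivWithin ρ (Icc 0 h) y) (Icc 0 h) z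
        + w z * derivWithin ρ (Icc 0 h) z + lam * ρ z = 0)
    (hb0 : derivWithin ρ (Icc 0 h) 0 = 0) (hbh : derivWithin ρ (Icc 0 h) h = 0)
    (hnorm : ρ 0 = 1) :
    (∀ t ∈ Ioc (0:ℝ) T,
      HasDerivWithinAt (fun t' => ∫ z in (0:ℝ)..h, ρ z * q z t')
        (k 0 * G t - lam * ∫ z in (0:ℝ)..h, ρ z * q z t) (Icc 0 T) t) ∧
    (∀ t ∈ Icc (0:ℝ) T,
      (∫ z in (0:ℝ)..h, ρ z * q z t)
        = k 0 * Real.exp (-lam * t) * ∫ s in (0:ℝ)..t, G s * Real.exp (lam * s)) := by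
  obtain ⟨qz, qzz, qt, S⟩ := hq
  have hI : UniqueDiffOn ℝ (Icc (0:ℝ) h) := uniqueDiffOn_Icc hh
  have huIh : uIcc (0:ℝ) h = Icc 0 h := uIcc_of_le hh.le
  set P : ℝ → ℝ := derivWithin ρ (Icc 0 h) with hPdef
  set kP : ℝ → ℝ := fun y => k y * P y with hkPdef
  set Q : ℝ → ℝ := derivWithin kP (Icc 0 h) with hQdef
  -- basic regularity facts
  have hρd : ∀ z ∈ Icc (0:ℝ) h, HasDerivWithinAt ρ (P z) (Icc 0 h) z :=
    fun z hz => ((hρ.differentiableOn (by norm_num)) z hz).hasDerivWithinAt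
  have hPc1 : ContDiffOn ℝ 1 P (Icc 0 h) := hρ.derivWithin hI (by norm_num)
  have hkPc1 : ContDiffOn ℝ 1 kP (Icc 0 h) := (hk.of_le (by norm_num)).mul hPc1
  have hkPd : ∀ z ∈ Icc (0:ℝ) h, HasDerivWithinAt kP (Q z) (Icc 0 h) z :=
    fun z hz => ((hkPc1.differentiableOn (by norm_num)) z hz).hasDerivWithinAt
  have hkd : ∀ z ∈ Icc (0:ℝ) h, HasDerivWithinAt k (derivWithin k (Icc 0 h) z) (Icc 0 h) z :=
    fun z hz => ((hk.differentiableOn (by norm_num)) z hz).hasDerivWithinAt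
  have hwd : ∀ z ∈ Icc (0:ℝ) h, HasDerivWithinAt w (derivWithin w (Icc 0 h) z) (Icc 0 h) z :=
    fun z hz => ((hw.differentiableOn (by norm_num)) z hz).hasDerivWithinAt
  have hPcont : ContinuousOn P (Icc 0 h) := hPc1.continuousOn
  have hkPcont : ContinuousOn kP (Icc 0 h) := hkPc1.continuousOn
  -- slices
  have sliceZ : ∀ {f : ℝ → ℝ → ℝ} {U : Set ℝ},
      ContinuousOn (fun x : ℝ × ℝ => f x.1 x.2) (Icc 0 h ×ˢ U) →
      ∀ s ∈ U, ContinuousOn (fun z => f z s) (Icc 0 h) := by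
    intro f U hf s hs
    exact hf.comp (continuous_id.prodMk continuous_const).continuousOn (fun z hz => ⟨hz, hs⟩)
  have sliceT : ∀ {f : ℝ → ℝ → ℝ} {U : Set ℝ},
      ContinuousOn (fun x : ℝ × ℝ => f x.1 x.2) (Icc 0 h ×ˢ U) →
      ∀ z ∈ Icc (0:ℝ) h, ContinuousOn (fun s => f z s) U := by
    intro f U hf z hz
    exact hf.comp (continuous_const.prodMk continuous_id).continuousOn (fun s hs => ⟨hz, hs⟩)
  -- define H
  set H : ℝ → ℝ := fun t => ∫ z in (0:ℝ)..h, ρ z * q z t with hHdef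
  -- integrability of slices
  have intρq : ∀ s ∈ Icc (0:ℝ) T, IntervalIntegrable (fun z => ρ z * q z s) volume 0 h := by
    intro s hs
    apply ContinuousOn.intervalIntegrable
    rw [huIh]
    exact hρ.continuousOn.mul (sliceZ S.cont s hs)
  have intρqt : ∀ s ∈ Ioc (0:ℝ) T, IntervalIntegrable (fun z => ρ z * qt z s) volume 0 h := by
    intro s hs
    apply ContinuousOn.intervalIntegrable
    rw [huIh]
    exact hρ.continuousOn.mul (sliceZ S.cont_t s hs)
  -- Claim B : integration by parts in z
  have keyB : ∀ s ∈ Ioc (0:ℝ) T,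
      (∫ z in (0:ℝ)..h, (ρ z * qt z s + lam * (ρ z * q z s))) = k 0 * G s := by
    intro s hs
    have hsIcc : s ∈ Icc (0:ℝ) T := Ioc_subset_Icc_self hs
    set g : ℝ → ℝ := fun z => ρ z * (k z * qz z s - w z * q z s) - kP z * q z s with hgdef
    have gcont : ContinuousOn g (Icc 0 h) := by
      apply ContinuousOn.sub
      · exact hρ.continuousOn.mul
          ((hk.continuousOn.mul (sliceZ S.cont_z s hs)).sub
            (hw.continuousOn.mul (sliceZ S.cont s hsIcc)))
      · exact hkPcont.mul (sliceZ S.cont s hsIcc)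
    have gderiv : ∀ z ∈ Ioo (0:ℝ) h,
        HasDerivWithinAt g (ρ z * qt z s + lam * (ρ z * q z s)) (Ioi z) z := by
      intro z hz
      have hz' : z ∈ Icc (0:ℝ) h := Ioo_subset_Icc_self hz
      have hmem := Icc_mem_nhds hz.1 hz.2
      have dρ : HasDerivAt ρ (P z) z := (hρd z hz').hasDerivAt hmem
      have dk : HasDerivAt k (derivWithin k (Icc 0 h) z) z := (hkd z hz').hasDerivAt hmem
      have dw : HasDerivAt w (derivWithin w (Icc 0 h) z) z := (hwd z hz').hasDerivAt hmem
      have dq : HasDerivAt (fun z' => q z' s) (qz z s) z :=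
        (S.hasDeriv_z z hz' s hs).hasDerivAt hmem
      have dqz : HasDerivAt (fun z' => qz z' s) (qzz z s) z :=
        (S.hasDeriv_zz z hz' s hs).hasDerivAt hmem
      have dkP : HasDerivAt kP (Q z) z := (hkPd z hz').hasDerivAt hmem
      have main : HasDerivAt g
          ((P z * (k z * qz z s - w z * q z s)
            + ρ z * ((derivWithin k (Icc 0 h) z * qz z s + k z * qzz z s)
              - (derivWithin w (Icc 0 h) z * q z s + w z * qz z s)))
            - (Q z * q z s + kP z * qz z s)) z :=
        (dρ.mul ((dk.mul dqz).sub (dw.mul dq))).sub (dkP.mul dq)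
      have hpde := S.pde z hz' s hs
      have he := heig z hz'
      have hkPz : kP z = k z * P z := rfl
      have : (P z * (k z * qz z s - w z * q z s)
            + ρ z * ((derivWithin k (Icc 0 h) z * qz z s + k z * qzz z s)
              - (derivWithin w (Icc 0 h) z * q z s + w z * qz z s)))
            - (Q z * q z s + kP z * qz z s)
          = ρ z * qt z s + lam * (ρ z * q z s) := by
        rw [hkPz]
        linear_combination (-(ρ z)) * hpde - q z s * he
      rw [this] at main
      exact main.hasDerivWithinAt
    have hint : IntervalIntegrable (fun z => ρ z * qt z s + lam * (ρ z * q z s)) volume 0 h :=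
      (intρqt s hs).add ((intρq s hsIcc).const_mul lam)
    have hFTC := integral_eq_sub_of_hasDeriv_right_of_le hh.le gcont gderiv hint
    rw [hFTC]
    have hgh : g h = 0 := by
      simp [hgdef, hkPdef, S.bc_upper s hs, hwh, hbh]
    have hg0 : g 0 = -(k 0 * G s) := by
      simp [hgdef, hkPdef, S.bc_lower s hs, hw0, hb0, hnorm]
    rw [hgh, hg0]; ring
  -- split keyB
  have keyB' : ∀ s ∈ Ioc (0:ℝ) T,
      (∫ z in (0:ℝ)..h, ρ z * qt z s) = k 0 * G s - lam * H s := by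
    intro s hs
    have hsplit : (∫ z in (0:ℝ)..h, (ρ z * qt z s + lam * (ρ z * q z s)))
        = (∫ z in (0:ℝ)..h, ρ z * qt z s) + lam * H s := by
      rw [intervalIntegral.integral_add (intρqt s hs)
        ((intρq s (Ioc_subset_Icc_self hs)).const_mul lam),
        intervalIntegral.integral_const_mul]
    have hB := keyB s hs
    rw [hsplit] at hB
    linarith
  -- continuity of H
  have Hcont : ContinuousOn H (Icc 0 T) := by
    have contρq : ContinuousOn (fun x : ℝ × ℝ => ρ x.1 * q x.1 x.2) (Icc 0 h ×ˢ Icc 0 T) :=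
      (hρ.continuousOn.comp continuous_fst.continuousOn (fun x hx => hx.1)).mul S.cont
    obtain ⟨C, hC⟩ := (isCompact_Icc.prod isCompact_Icc).exists_bound_of_continuousOn contρq
    intro t ht
    apply intervalIntegral.continuousWithinAt_of_dominated_interval (bound := fun _ => C)
    · filter_upwards [self_mem_nhdsWithin] with x hx
      rw [uIoc_of_le hh.le]
      exact ((hρ.continuousOn.mul (sliceZ S.cont x hx)).mono
        Ioc_subset_Icc_self).aestronglyMeasurable measurableSet_Ioc
    · filter_upwards [self_mem_nhdsWithin] with x hx
      apply Eventually.of_forall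
      intro z hz
      rw [uIoc_of_le hh.le] at hz
      exact hC (z, x) ⟨Ioc_subset_Icc_self hz, hx⟩
    · exact intervalIntegrable_const
    · apply Eventually.of_forall
      intro z hz
      rw [uIoc_of_le hh.le] at hz
      exact (continuous_const.continuousOn.mul (sliceT S.cont z (Ioc_subset_Icc_self hz))) t ht
  -- Fubini step
  have keyA : ∀ a b : ℝ, 0 < a → a ≤ b → b ≤ T →
      H b - H a = ∫ s in a..b, (k 0 * G s - lam * H s) := by
    intro a b ha hab hbT
    have hsub : Icc a b ⊆ Ioc 0 T := fun x hx => ⟨lt_of_lt_of_le ha hx.1, hx.2.trans hbT⟩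
    have Fcont : ContinuousOn (fun x : ℝ × ℝ => ρ x.2 * qt x.2 x.1) (Icc a b ×ˢ Icc 0 h) :=
      (hρ.continuousOn.comp continuous_snd.continuousOn (fun x hx => hx.2)).mul
        (S.cont_t.comp (continuous_snd.prodMk continuous_fst).continuousOn
          (fun x hx => ⟨hx.2, hsub hx.1⟩))
    have Fint : IntegrableOn (fun x : ℝ × ℝ => ρ x.2 * qt x.2 x.1)
        (Ioc a b ×ˢ Ioc 0 h) volume :=
      ((Fcont.integrableOn_compact (isCompact_Icc.prod isCompact_Icc)).mono_set
        (prod_mono Ioc_subset_Icc_self Ioc_subset_Icc_self))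
    have swap : (∫ s in a..b, ∫ z in (0:ℝ)..h, ρ z * qt z s)
        = ∫ z in Ioc (0:ℝ) h, ∫ s in Ioc a b, ρ z * qt z s := by
      rw [intervalIntegral.integral_of_le hab]
      have hin : ∀ s, (∫ z in (0:ℝ)..h, ρ z * qt z s)
          = ∫ z in Ioc (0:ℝ) h, ρ z * qt z s := fun s => intervalIntegral.integral_of_le hh.le
      simp_rw [hin]
      apply MeasureTheory.integral_integral_swap
      rw [Measure.prod_restrict, ← Measure.volume_eq_prod]
      exact Fint
    have inner : ∀ z ∈ Ioc (0:ℝ) h,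
        (∫ s in Ioc a b, ρ z * qt z s) = ρ z * (q z b - q z a) := by
      intro z hz
      have hz' : z ∈ Icc (0:ℝ) h := Ioc_subset_Icc_self hz
      rw [← intervalIntegral.integral_of_le hab, intervalIntegral.integral_const_mul]
      congr 1
      apply integral_eq_sub_of_hasDeriv_right_of_le hab
      · exact (sliceT S.cont z hz').mono (Icc_subset_Icc ha.le hbT)
      · intro s hsmem
        have hsT : s ∈ Ioc (0:ℝ) T := ⟨ha.trans hsmem.1, hsmem.2.le.trans hbT⟩
        exact ((S.hasDeriv_t z hz' s hsT).hasDerivAt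
          (Icc_mem_nhds (ha.trans hsmem.1) (lt_of_lt_of_le hsmem.2 hbT))).hasDerivWithinAt
      · apply ContinuousOn.intervalIntegrable
        rw [uIcc_of_le hab]
        exact (sliceT S.cont_t z hz').mono hsub
    have step2 : (∫ z in Ioc (0:ℝ) h, ∫ s in Ioc a b, ρ z * qt z s) = H b - H a := by
      rw [MeasureTheory.setIntegral_congr_fun measurableSet_Ioc inner,
        ← intervalIntegral.integral_of_le hh.le]
      have hb' : b ∈ Icc (0:ℝ) T := ⟨(ha.trans_le hab).le, hbT⟩
      have ha' : a ∈ Icc (0:ℝ) T := ⟨ha.le, hab.trans hbT⟩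
      simp_rw [mul_sub]
      exact intervalIntegral.integral_sub (intρq b hb') (intρq a ha')
    have eqcongr : (∫ s in a..b, ∫ z in (0:ℝ)..h, ρ z * qt z s)
        = ∫ s in a..b, (k 0 * G s - lam * H s) := by
      apply intervalIntegral.integral_congr
      intro s hsm
      rw [uIcc_of_le hab] at hsm
      exact keyB' s (hsub hsm)
    rw [← eqcongr, swap, step2]
  -- part 1
  have part1 : ∀ t ∈ Ioc (0:ℝ) T,
      HasDerivWithinAt H (k 0 * G t - lam * H t) (Icc 0 T) t := by
    intro t ht
    have Φcont : ContinuousOn (fun s => k 0 * G s - lam * H s) (Icc 0 T) :=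
      (continuousOn_const.mul hG).sub (continuousOn_const.mul Hcont)
    have ha : (0:ℝ) < t/2 := by linarith [ht.1]
    have hat : t/2 ≤ t := by linarith [ht.1]
    have key : ∀ u ∈ Ioc (0:ℝ) T,
        H u = H (t/2) + ∫ s in (t/2)..u, (k 0 * G s - lam * H s) := by
      intro u hu
      rcases le_total (t/2) u with hle | hle
      · have := keyA (t/2) u ha hle hu.2
        linarith
      · have := keyA u (t/2) hu.1 hle (hat.trans ht.2)
        rw [intervalIntegral.integral_symm]
        linarith
    haveI : Fact (t ∈ Icc (0:ℝ) T) := ⟨Ioc_subset_Icc_self ht⟩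
    have hFTC : HasDerivWithinAt (fun u => ∫ s in (t/2)..u, (k 0 * G s - lam * H s))
        (k 0 * G t - lam * H t) (Icc 0 T) t := by
      apply intervalIntegral.integral_hasDerivWithinAt_right
      · apply ContinuousOn.intervalIntegrable
        apply Φcont.mono
        rw [uIcc_of_le hat]
        exact Icc_subset_Icc ha.le ht.2
      · exact Φcont.stronglyMeasurableAtFilter_nhdsWithin measurableSet_Icc t
      · exact Φcont t (Ioc_subset_Icc_self ht)
    have hadd := hFTC.const_add (H (t/2))
    refine HasDerivWithinAt.congr_of_eventuallyEq hadd ?_ (key t ht)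
    have hmem : Ioc (0:ℝ) T ∈ nhdsWithin t (Icc 0 T) :=
      mem_nhdsWithin.mpr ⟨Ioi 0, isOpen_Ioi, ht.1, fun x hx => ⟨hx.1, hx.2.2⟩⟩
    filter_upwards [hmem] with u hu
    exact key u hu
  -- part 2 setup
  set J : ℝ → ℝ := fun u => ∫ s in (0:ℝ)..u, G s * Real.exp (lam * s) with hJdef
  set K : ℝ → ℝ := fun u => k 0 * Real.exp (-lam * u) * J u with hKdef
  have hGE : ContinuousOn (fun s => G s * Real.exp (lam * s)) (Icc 0 T) :=
    hG.mul (Real.continuous_exp.comp (continuous_const.mul continuous_id)).continuousOn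
  have Jcont : ContinuousOn J (Icc 0 T) := by
    have hprim := intervalIntegral.continuousOn_primitive_interval
      (a := 0) (b := T) (μ := volume) (f := fun s => G s * Real.exp (lam * s)) ?_
    · rwa [uIcc_of_le hT.le] at hprim
    · rw [uIcc_of_le hT.le]
      exact hGE.integrableOn_compact isCompact_Icc
  have Kcont : ContinuousOn K (Icc 0 T) :=
    (continuous_const.mul (Real.continuous_exp.comp
      (continuous_const.mul continuous_id))).continuousOn.mul Jcont
  have Kderiv : ∀ t ∈ Ioc (0:ℝ) T,
      HasDerivWithinAt K (k 0 * G t - lam * K t) (Icc 0 T) t := by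
    intro t ht
    haveI : Fact (t ∈ Icc (0:ℝ) T) := ⟨Ioc_subset_Icc_self ht⟩
    have hJd : HasDerivWithinAt J (G t * Real.exp (lam * t)) (Icc 0 T) t := by
      apply intervalIntegral.integral_hasDerivWithinAt_right
      · apply ContinuousOn.intervalIntegrable
        apply hGE.mono
        rw [uIcc_of_le ht.1.le]
        exact Icc_subset_Icc le_rfl ht.2
      · exact hGE.stronglyMeasurableAtFilter_nhdsWithin measurableSet_Icc t
      · exact hGE t (Ioc_subset_Icc_self ht)
    have hEd : HasDerivAt (fun u => Real.exp (-lam * u)) (Real.exp (-lam * t) * (-lam)) t := by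
      simpa using ((hasDerivAt_id t).const_mul (-lam)).exp
    have hmul := (hEd.hasDerivWithinAt.mul hJd).const_mul (k 0)
    have hfun : (fun u => k 0 * (Real.exp (-lam * u) * J u)) = K := by
      funext u; rw [hKdef]; ring
    simp only [Pi.mul_apply] at hmul
    rw [hfun] at hmul
    refine hmul.congr_deriv ?_
    rw [hKdef]
    have hexp : Real.exp (-lam * t) * Real.exp (lam * t) = 1 := by
      rw [← Real.exp_add]; norm_num
    linear_combination (k 0 * G t) * hexp
  have H0 : H 0 = 0 := by
    show (∫ z in (0:ℝ)..h, ρ z * q z 0) = 0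
    have heq : EqOn (fun z => ρ z * q z 0) (fun _ => (0:ℝ)) (uIcc 0 h) := by
      intro z hz
      rw [huIh] at hz
      simp [S.ic z hz]
    rw [intervalIntegral.integral_congr heq]
    simp
  have K0 : K 0 = 0 := by simp [hKdef, hJdef]
  set D : ℝ → ℝ := fun u => Real.exp (lam * u) * (H u - K u) with hDdef
  have Dcont : ContinuousOn D (Icc 0 T) :=
    (Real.continuous_exp.comp (continuous_const.mul continuous_id)).continuousOn.mul
      (Hcont.sub Kcont)
  have Dderiv : ∀ t ∈ Ioc (0:ℝ) T, HasDerivWithinAt D 0 (Icc 0 T) t := by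
    intro t ht
    have hEd : HasDerivAt (fun u => Real.exp (lam * u)) (Real.exp (lam * t) * lam) t := by
      simpa using ((hasDerivAt_id t).const_mul lam).exp
    have hHK := (part1 t ht).sub (Kderiv t ht)
    have hD := hEd.hasDerivWithinAt.mul hHK
    simp only [Pi.mul_apply, Pi.sub_apply] at hD
    refine hD.congr_deriv ?_
    ring
  have Dzero : ∀ t ∈ Ioc (0:ℝ) T, D t = 0 := by
    intro t ht
    have hconst : ∀ ε, 0 < ε → ε ≤ t → D t = D ε := by
      intro ε hε hεt
      have hcont' : ContinuousOn D (Icc ε t) := Dcont.mono (Icc_subset_Icc hε.le ht.2)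
      have hderiv' : ∀ x ∈ Ico ε t, HasDerivWithinAt D 0 (Ici x) x := by
        intro x hx
        have hxT : x ∈ Ioc (0:ℝ) T := ⟨hε.trans_le hx.1, hx.2.le.trans ht.2⟩
        exact (Dderiv x hxT).mono_of_mem_nhdsWithin
          (Icc_mem_nhdsGE_of_mem ⟨hxT.1.le, hx.2.trans_le ht.2⟩)
      exact constant_of_has_deriv_right_zero hcont' hderiv' t ⟨hεt, le_rfl⟩
    have h1 : Tendsto D (nhdsWithin 0 (Ioc 0 t)) (nhds (D 0)) :=
      (Dcont 0 ⟨le_rfl, hT.le⟩).mono (fun x hx => ⟨hx.1.le, hx.2.trans ht.2⟩)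
    have h2 : Tendsto D (nhdsWithin 0 (Ioc 0 t)) (nhds (D t)) := by
      apply Tendsto.congr' _ tendsto_const_nhds
      filter_upwards [self_mem_nhdsWithin] with ε hε
      exact hconst ε hε.1 hε.2
    haveI : (nhdsWithin (0:ℝ) (Ioc 0 t)).NeBot := by
      rw [nhdsWithin_Ioc_eq_nhdsGT ht.1]
      infer_instance
    have huniq := tendsto_nhds_unique h2 h1
    have hD0 : D 0 = 0 := by simp [hDdef, H0, K0]
    rw [hD0] at huniq
    exact huniq
  refine ⟨part1, ?_⟩
  intro t ht
  show H t = K t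
  rcases eq_or_lt_of_le ht.1 with h0 | h0
  · rw [← h0, H0, K0]
  · have hd := Dzero t ⟨h0, ht.2⟩
    have hexp : Real.exp (lam * t) ≠ 0 := Real.exp_ne_zero _
    rcases mul_eq_zero.mp hd with hc | hc
    · exact absurd hc hexp
    · exact sub_eq_zero.mp hc
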